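/- arXiv:2102.12688 — 2 statements merged into one kernel-verified Lean document; each statement's English description precedes it below -/
import Mathlib

section
/- Let $q$ be a real number with $q > 0$ and $q \ne 1$. Define $C_q(p,r,n)$ and $D_q(p,r,n)$ for integers $p \ge 0$, $r \ge 1$, $n \ge 0$ by $C_q(0,r,n) = 0$, $D_q(0,r,n) = 0$, and for $p \ge 1$: $C_q(p,r,n) = \frac{[n]_q}{[r]_q}\bigl(q^{(p-1)(n-1)} + (1 - q^{p-1}) C_q(p-1, r+1, n-1)\bigr)$ and $D_q(p,r,n) = \frac{q^{r-1}}{[r]_q} \binom{n+r-1}{r}_q \bigl(q^{(p-1)(n-1)} + (1 - q^{p-1}) C_q(p-1, r+1, n-1)\bigr) + (1 - q^{p-1}) D_q(p-1, r+1, n-1)$. Then for all positive integers $n$, $p$, $r$, $\sum_{\ell=1}^{n} q^{p(n-\ell)} H_{n-\ell}^{(r)}(q) = C_q(p,r,n) H_n^{(r)}(q) - D_q(p,r,n)$. -/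
/-- The `q`-integer `[n]_q = (1 - q^n)/(1 - q)`. -/
noncomputable def qint (q : ℝ) (n : ℕ) : ℝ := (1 - q ^ n) / (1 - q)

/-- The `q`-factorial `[n]_q! = [n]_q [n-1]_q ⋯ [1]_q`, with `[0]_q! = 1`. -/
noncomputable def qfact (q : ℝ) : ℕ → ℝ
  | 0 => 1
  | n + 1 => qint q (n + 1) * qfact q n

/-- The `q`-binomial coefficient `C(n,k)_q = [n]_q!/([k]_q! [n-k]_q!)`, equal to `0` for `k > n`. -/
noncomputable def qbinom (q : ℝ) (n k : ℕ) : ℝ :=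
  if k ≤ n then qfact q n / (qfact q k * qfact q (n - k)) else 0

/-- The `q`-hyperharmonic numbers: `H_n^{(0)}(q) = 1/(q [n]_q)` and
`H_n^{(r)}(q) = ∑_{j=1}^n q^j H_j^{(r-1)}(q)` for `r ≥ 1` (so `H_0^{(r)}(q) = 0`). -/
noncomputable def qhyp (q : ℝ) : ℕ → ℕ → ℝ
  | 0, n => 1 / (q * qint q n)
  | r + 1, n => ∑ j ∈ Finset.Icc 1 n, q ^ j * qhyp q r j

/-- `C_q(p,r,n)`, defined by `C_q(0,r,n) = 0` and, for `p ≥ 1`,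
`C_q(p,r,n) = ([n]_q/[r]_q) (q^{(p-1)(n-1)} + (1 - q^{p-1}) C_q(p-1, r+1, n-1))`. -/
noncomputable def Cq (q : ℝ) : ℕ → ℕ → ℕ → ℝ
  | 0, _, _ => 0
  | p + 1, r, n => qint q n / qint q r *
      (q ^ (p * (n - 1)) + (1 - q ^ p) * Cq q p (r + 1) (n - 1))

/-- `D_q(p,r,n)`, defined by `D_q(0,r,n) = 0` and, for `p ≥ 1`,
`D_q(p,r,n) = (q^{r-1}/[r]_q) C(n+r-1, r)_q (q^{(p-1)(n-1)} + (1 - q^{p-1}) C_q(p-1, r+1, n-1))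
   + (1 - q^{p-1}) D_q(p-1, r+1, n-1)`. -/
noncomputable def Dq (q : ℝ) : ℕ → ℕ → ℕ → ℝ
  | 0, _, _ => 0
  | p + 1, r, n => q ^ (r - 1) / qint q r * qbinom q (n + r - 1) r *
      (q ^ (p * (n - 1)) + (1 - q ^ p) * Cq q p (r + 1) (n - 1)) +
      (1 - q ^ p) * Dq q p (r + 1) (n - 1)

section Lemmas
variable (q : ℝ)

lemma Cq_succ (p r n : ℕ) : Cq q (p+1) r n = qint q n / qint q r *
      (q ^ (p * (n - 1)) + (1 - q ^ p) * Cq q p (r + 1) (n - 1)) := rfl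

lemma Dq_succ (p r n : ℕ) : Dq q (p+1) r n = q ^ (r - 1) / qint q r * qbinom q (n + r - 1) r *
      (q ^ (p * (n - 1)) + (1 - q ^ p) * Cq q p (r + 1) (n - 1)) +
      (1 - q ^ p) * Dq q p (r + 1) (n - 1) := rfl

lemma qhyp_zero_eq (n : ℕ) : qhyp q 0 n = 1 / (q * qint q n) := rfl

lemma qhyp_succ_eq (r n : ℕ) : qhyp q (r+1) n = ∑ j ∈ Finset.Icc 1 n, q ^ j * qhyp q r j := rfl

lemma qfact_succ (n : ℕ) : qfact q (n+1) = qint q (n+1) * qfact q n := rfl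

lemma qint_one (hq : 0 < q) (hq1 : q ≠ 1) : qint q 1 = 1 := by
  simp [qint]
  exact sub_ne_zero.2 (Ne.symm hq1)

lemma pow_ne_one' (hq : 0 < q) (hq1 : q ≠ 1) {n : ℕ} (hn : n ≠ 0) : q ^ n ≠ 1 := by
  rcases lt_or_gt_of_ne hq1 with h | h
  · exact ne_of_lt (pow_lt_one₀ hq.le h hn)
  · exact ne_of_gt (one_lt_pow₀ h hn)

lemma qint_ne_zero (hq : 0 < q) (hq1 : q ≠ 1) {n : ℕ} (hn : n ≠ 0) : qint q n ≠ 0 :=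
  div_ne_zero (sub_ne_zero.2 (Ne.symm (pow_ne_one' q hq hq1 hn))) (sub_ne_zero.2 (Ne.symm hq1))

lemma qfact_ne_zero (hq : 0 < q) (hq1 : q ≠ 1) (n : ℕ) : qfact q n ≠ 0 := by
  induction n with
  | zero => norm_num [qfact]
  | succ n ih => exact mul_ne_zero (qint_ne_zero q hq hq1 n.succ_ne_zero) ih

lemma qbinom_self (hq : 0 < q) (hq1 : q ≠ 1) (n : ℕ) : qbinom q n n = 1 := by
  rw [qbinom, if_pos le_rfl, Nat.sub_self]
  show qfact q n / (qfact q n * 1) = 1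
  rw [mul_one, div_self (qfact_ne_zero q hq hq1 n)]

lemma qbinom_zero_right (hq : 0 < q) (hq1 : q ≠ 1) (n : ℕ) : qbinom q n 0 = 1 := by
  rw [qbinom, if_pos (Nat.zero_le n), Nat.sub_zero]
  show qfact q n / (1 * qfact q n) = 1
  rw [one_mul, div_self (qfact_ne_zero q hq hq1 n)]

lemma qint_succ (hq : 0 < q) (hq1 : q ≠ 1) (n : ℕ) : qint q (n+1) = 1 + q * qint q n := by
  have h : (1:ℝ) - q ≠ 0 := sub_ne_zero.2 (Ne.symm hq1)
  simp only [qint]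
  field_simp
  ring

lemma qint_add_pow (hq : 0 < q) (hq1 : q ≠ 1) (n : ℕ) : qint q (n+1) = qint q n + q ^ n := by
  have h : (1:ℝ) - q ≠ 0 := sub_ne_zero.2 (Ne.symm hq1)
  simp only [qint]
  field_simp
  ring

lemma qpascal (hq : 0 < q) (hq1 : q ≠ 1) (b k : ℕ) : qbinom q (b+k+2) (k+1)
    = qbinom q (b+k+1) (k+1) + q ^ (b+1) * qbinom q (b+k+1) k := by
  rw [qbinom, qbinom, qbinom, if_pos (by omega), if_pos (by omega), if_pos (by omega)]
  have e1 : b+k+2 - (k+1) = b+1 := by omega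
  have e2 : b+k+1 - (k+1) = b := by omega
  have e3 : b+k+1 - k = b+1 := by omega
  rw [e1, e2, e3]
  have key : qint q (b+k+2) = qint q (b+1) + q ^ (b+1) * qint q (k+1) := by
    have h : (1:ℝ) - q ≠ 0 := sub_ne_zero.2 (Ne.symm hq1)
    simp only [qint]
    field_simp
    ring
  have h1 : qfact q (b+k+2) = qint q (b+k+2) * qfact q (b+k+1) := rfl
  have h2 : qfact q (b+1) = qint q (b+1) * qfact q b := rfl
  have h3 : qfact q (k+1) = qint q (k+1) * qfact q k := rfl
  rw [h1, h2, h3, key]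
  have nb := qfact_ne_zero q hq hq1 b
  have nk := qfact_ne_zero q hq hq1 k
  have nib : qint q (b+1) ≠ 0 := qint_ne_zero q hq hq1 (by omega)
  have nik : qint q (k+1) ≠ 0 := qint_ne_zero q hq hq1 (by omega)
  field_simp

end Lemmas

lemma qhyp_succ_zero (q : ℝ) (r : ℕ) : qhyp q (r+1) 0 = 0 := by
  rw [qhyp_succ_eq]; simp

lemma qhyp_succ_succ (q : ℝ) (r n : ℕ) :
    qhyp q (r+1) (n+1) = qhyp q (r+1) n + q ^ (n+1) * qhyp q r (n+1) := by
  rw [qhyp_succ_eq, qhyp_succ_eq, Finset.sum_Icc_succ_top (by omega)]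

lemma qhyp_one (q : ℝ) (hq : 0 < q) (hq1 : q ≠ 1) (r : ℕ) : qhyp q (r+1) 1 = q ^ r := by
  induction r with
  | zero =>
    rw [qhyp_succ_eq]
    simp [qhyp_zero_eq, qint_one q hq hq1]
    field_simp
  | succ r ih =>
    rw [qhyp_succ_eq]
    simp only [Finset.Icc_self, Finset.sum_singleton, ih, pow_one]
    ring

lemma lemK (q : ℝ) (hq : 0 < q) (hq1 : q ≠ 1) (r n : ℕ) :
    q * qint q r * qhyp q (r+1) n
      = q * qint q (n+1) * qhyp q r (n+1) - q ^ r * qbinom q (n + r) r := by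
  induction r generalizing n with
  | zero =>
    have h0 : qint q 0 = 0 := by simp [qint]
    rw [h0, mul_zero, zero_mul, qhyp_zero_eq, pow_zero, Nat.add_zero,
      qbinom_zero_right q hq hq1, one_mul, mul_one_div,
      div_self (mul_ne_zero hq.ne' (qint_ne_zero q hq hq1 n.succ_ne_zero))]
    ring
  | succ r ihr =>
    induction n with
    | zero =>
      rw [qhyp_succ_zero, qhyp_one q hq hq1 r, qint_one q hq hq1]
      simp only [Nat.zero_add, qbinom_self q hq hq1]
      ring
    | succ n ihn =>
      have hr1 : qhyp q (r+1+1) (n+1) = qhyp q (r+1+1) n + q ^ (n+1) * qhyp q (r+1) (n+1) :=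
        qhyp_succ_succ q (r+1) n
      have hr2 : qhyp q (r+1) (n+2) = qhyp q (r+1) (n+1) + q ^ (n+2) * qhyp q r (n+2) :=
        qhyp_succ_succ q r (n+1)
      have hp : qbinom q (n+r+2) (r+1)
          = qbinom q (n+r+1) (r+1) + q ^ (n+1) * qbinom q (n+r+1) r := qpascal q hq hq1 n r
      have hx : qint q (n+2) = qint q (n+1) + q ^ (n+1) := qint_add_pow q hq hq1 (n+1)
      have hy : qint q (r+1) = 1 + q * qint q r := qint_succ q hq hq1 r
      have IHr := ihr (n+1)
      have e1 : n + 1 + (r + 1) = n + r + 2 := by omega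
      have e2 : n + (r + 1) = n + r + 1 := by omega
      have e3 : n + 1 + r = n + r + 1 := by omega
      rw [e1]
      rw [e2] at ihn
      rw [e3] at IHr
      rw [hx] at IHr
      rw [hx]
      rw [hr1, hr2, hp, hy]
      rw [hy] at ihn
      linear_combination ihn + q^(n+2) * IHr

lemma qint_zero (q : ℝ) : qint q 0 = 0 := by simp [qint]

lemma Cq_zero' (q : ℝ) (p r : ℕ) : Cq q p r 0 = 0 := by
  cases p with
  | zero => rfl
  | succ p => rw [Cq_succ, qint_zero, zero_div, zero_mul]

lemma Dq_zero' (q : ℝ) (p : ℕ) : ∀ r, Dq q p r 0 = 0 := by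
  induction p with
  | zero => intro r; rfl
  | succ p ih =>
    intro r
    rw [Dq_succ, ih (r+1)]
    rcases Nat.eq_zero_or_pos r with hr | hr
    · subst hr
      rw [qint_zero]
      simp
    · have hb : qbinom q (0 + r - 1) r = 0 := by
        rw [qbinom, if_neg (by omega)]
      rw [hb]
      simp

lemma abelLem (q : ℝ) (p r M : ℕ) :
    ∑ k ∈ Finset.Icc 1 (M+1), q ^ ((p+1) * k) * qhyp q r k
      = q ^ (p * (M+1)) * qhyp q (r+1) (M+1)
        + (1 - q ^ p) * ∑ k ∈ Finset.Icc 1 M, q ^ (p * k) * qhyp q (r+1) k := by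
  induction M with
  | zero =>
    have h1 : qhyp q (r+1) 1 = qhyp q (r+1) 0 + q ^ (0+1) * qhyp q r 1 := qhyp_succ_succ q r 0
    rw [Finset.Icc_self, Finset.sum_singleton,
      show Finset.Icc 1 0 = ∅ from Finset.Icc_eq_empty (by omega), Finset.sum_empty,
      h1, qhyp_succ_zero]
    ring
  | succ M ih =>
    rw [Finset.sum_Icc_succ_top (by omega : 1 ≤ M+1+1), ih,
      Finset.sum_Icc_succ_top (by omega : 1 ≤ M+1),
      qhyp_succ_succ q r (M+1)]
    ring

lemma auxT (q : ℝ) (hq : 0 < q) (hq1 : q ≠ 1) (p : ℕ) :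
    ∀ s N : ℕ, ∑ k ∈ Finset.Icc 1 N, q ^ ((p+1) * k) * qhyp q (s+1) k
      = Cq q (p+1) (s+1) (N+1) * qhyp q (s+1) (N+1) - Dq q (p+1) (s+1) (N+1) := by
  induction p with
  | zero =>
    intro s N
    have hT : ∑ k ∈ Finset.Icc 1 N, q ^ ((0+1) * k) * qhyp q (s+1) k
        = qhyp q (s+2) N := by
      rw [qhyp_succ_eq]
      apply Finset.sum_congr rfl
      intro k _
      norm_num
    rw [hT, Cq_succ q 0 (s+1) (N+1), Dq_succ q 0 (s+1) (N+1)]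
    have e1 : N + 1 - 1 = N := by omega
    have e2 : N + 1 + (s + 1) - 1 = N + (s+1) := by omega
    rw [e1, e2]
    simp only [pow_zero, sub_self, zero_mul, add_zero, mul_one, mul_zero]
    have e3 : s + 1 - 1 = s := by omega
    rw [e3]
    -- use lemK
    have K := lemK q hq hq1 (s+1) N
    have K2 : qint q (s+1) * qhyp q (s+2) N
        = qint q (N+1) * qhyp q (s+1) (N+1) - q ^ s * qbinom q (N + (s+1)) (s+1) := by
      apply mul_left_cancel₀ hq.ne'
      rw [show qhyp q (s+1+1) N = qhyp q (s+2) N from rfl] at K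
      linear_combination K
    have hy : qint q (s+1) ≠ 0 := qint_ne_zero q hq hq1 (by omega)
    field_simp
    linear_combination K2
  | succ p ih =>
    intro s N
    cases N with
    | zero =>
      rw [show Finset.Icc 1 0 = ∅ from Finset.Icc_eq_empty (by omega), Finset.sum_empty,
        Cq_succ q (p+1) (s+1) (0+1), Dq_succ q (p+1) (s+1) (0+1)]
      have e1 : (0:ℕ) + 1 - 1 = 0 := by omega
      have e2 : (0:ℕ) + 1 + (s+1) - 1 = s + 1 := by omega
      have e3 : s + 1 - 1 = s := by omega
      have e4 : (0:ℕ) + 1 = 1 := by omega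
      rw [e1, e2, e3, Cq_zero', Dq_zero', e4, qbinom_self q hq hq1 (s+1), qint_one q hq hq1,
        qhyp_one q hq hq1 s]
      ring
    | succ M =>
      rw [abelLem q (p+1) (s+1) M, ih (s+1) M]
      rw [Cq_succ q (p+1) (s+1) (M+1+1), Dq_succ q (p+1) (s+1) (M+1+1)]
      have e1 : M + 1 + 1 - 1 = M + 1 := by omega
      have e2 : M + 1 + 1 + (s+1) - 1 = M + 1 + (s+1) := by omega
      have e3 : s + 1 - 1 = s := by omega
      rw [e1, e2, e3]
      have K := lemK q hq hq1 (s+1) (M+1)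
      have K2 : qint q (s+1) * qhyp q (s+1+1) (M+1)
          = qint q (M+1+1) * qhyp q (s+1) (M+1+1)
            - q ^ s * qbinom q (M+1 + (s+1)) (s+1) := by
        apply mul_left_cancel₀ hq.ne'
        linear_combination K
      have hy : qint q (s+1) ≠ 0 := qint_ne_zero q hq hq1 (by omega)
      rw [show qhyp q (s+1+1) (M+1) = qhyp q (s+2) (M+1) from rfl] at K2
      field_simp
      linear_combination (q ^ ((p+1) * (M+1)) + (1 - q ^ (p+1)) * Cq q (p+1) (s+1+1) (M+1)) * K2

/-- For `q > 0`, `q ≠ 1` and positive integers `n, p, r`,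
`∑_{ℓ=1}^n q^{p(n-ℓ)} H_{n-ℓ}^{(r)}(q) = C_q(p,r,n) H_n^{(r)}(q) - D_q(p,r,n)`. -/
theorem sum_backward_qpow_mul_qhyp (q : ℝ) (hq : 0 < q) (hq1 : q ≠ 1) (n p r : ℕ)
    (hn : 1 ≤ n) (hp : 1 ≤ p) (hr : 1 ≤ r) :
    ∑ ℓ ∈ Finset.Icc 1 n, q ^ (p * (n - ℓ)) * qhyp q r (n - ℓ) =
      Cq q p r n * qhyp q r n - Dq q p r n := by
  obtain ⟨N, rfl⟩ : ∃ N, n = N + 1 := ⟨n - 1, by omega⟩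
  obtain ⟨P, rfl⟩ : ∃ P, p = P + 1 := ⟨p - 1, by omega⟩
  obtain ⟨s, rfl⟩ : ∃ s, r = s + 1 := ⟨r - 1, by omega⟩
  have reidx : ∑ ℓ ∈ Finset.Icc 1 (N+1), q ^ ((P+1) * (N+1-ℓ)) * qhyp q (s+1) (N+1-ℓ)
      = ∑ k ∈ Finset.Icc 0 N, q ^ ((P+1) * k) * qhyp q (s+1) k := by
    refine Finset.sum_nbij' (i := fun ℓ => N+1-ℓ) (j := fun k => N+1-k) ?_ ?_ ?_ ?_ ?_
    · intro a ha; simp only [Finset.mem_Icc] at ha ⊢; omega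
    · intro a ha; simp only [Finset.mem_Icc] at ha ⊢; omega
    · intro a ha; simp only [Finset.mem_Icc] at ha; omega
    · intro a ha; simp only [Finset.mem_Icc] at ha; omega
    · intro a _; rfl
  have split0 : Finset.Icc 0 N = insert 0 (Finset.Icc 1 N) := by
    ext x; simp [Finset.mem_Icc, Finset.mem_insert]; omega
  rw [reidx, split0, Finset.sum_insert (by simp)]
  rw [qhyp_succ_zero, mul_zero, zero_add]
  exact auxT q hq hq1 P s N
end

section
/- For all positive integers $n$ and $r$, the hyperharmonic numbers satisfy the recurrence $H_n^{(r+1)} = \frac{n+r}{r} H_n^{(r)} - \frac{1}{r} \binom{n+r-1}{r}$. -/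
/-- The harmonic number `H_n = ∑_{j=1}^n 1/j`. -/
noncomputable def harm (n : ℕ) : ℝ := ∑ j ∈ Finset.Icc 1 n, (1 : ℝ) / j

/-- The hyperharmonic numbers: `H_n^{(1)} = H_n` and
`H_n^{(r)} = ∑_{ℓ=1}^n H_ℓ^{(r-1)}` for `r ≥ 2` (so `H_0^{(r)} = 0`). -/
noncomputable def hyp : ℕ → ℕ → ℝ
  | 0, _ => 0
  | 1, n => harm n
  | r + 2, n => ∑ ℓ ∈ Finset.Icc 1 n, hyp (r + 1) ℓ

/-- The rising factorial `(x)^{(m)} = x (x+1) ⋯ (x+m-1)`, with `(x)^{(0)} = 1`. -/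
noncomputable def rise (x : ℝ) (m : ℕ) : ℝ := ∏ i ∈ Finset.range m, (x + i)

lemma harm_succ (m : ℕ) : harm (m + 1) = harm m + 1 / (m + 1) := by
  unfold harm
  rw [Finset.sum_Icc_succ_top (by omega)]
  push_cast; ring

lemma succ_mul_choose_real (m k : ℕ) :
    ((m : ℝ) + 1) * ((m.choose k) : ℝ) = ((m + 1).choose (k + 1) : ℝ) * ((k : ℝ) + 1) := by
  have h := Nat.add_one_mul_choose_eq m k
  exact_mod_cast congrArg (Nat.cast : ℕ → ℝ) h

lemma pascal_real (m k : ℕ) :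
    (((m + 1).choose (k + 1)) : ℝ) = ((m.choose k) : ℝ) + ((m.choose (k + 1)) : ℝ) := by
  rw [Nat.choose_succ_succ m k]; push_cast; ring

lemma hyp_closed (r : ℕ) : ∀ n : ℕ,
    hyp (r + 1) n = (((n + r).choose r) : ℝ) * (harm (n + r) - harm r) := by
  induction r with
  | zero =>
    intro n
    simp [hyp, harm]
  | succ r ih =>
    intro n
    induction n with
    | zero => simp [hyp]
    | succ n ihn =>
      have hrec : hyp (r + 1 + 1) (n + 1) = hyp (r + 1 + 1) n + hyp (r + 1) (n + 1) := by
        show (∑ ℓ ∈ Finset.Icc 1 (n + 1), hyp (r + 1) ℓ) = _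
        rw [Finset.sum_Icc_succ_top (by omega)]
        rfl
      rw [hrec, ihn, ih (n + 1)]
      have e1 : n + 1 + (r + 1) = (n + r + 1) + 1 := by omega
      have e2 : n + 1 + r = n + r + 1 := by omega
      have e3 : n + (r + 1) = n + r + 1 := by omega
      rw [e1, e2, e3, harm_succ (n + r + 1), harm_succ r]
      set A : ℝ := (((n + r + 1 + 1).choose (r + 1)) : ℝ) with hA
      set B : ℝ := (((n + r + 1).choose (r + 1)) : ℝ) with hB
      set D : ℝ := (((n + r + 1).choose r) : ℝ) with hD
      have pas : A = D + B := pascal_real (n + r + 1) r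
      have key : ((n : ℝ) + r + 1 + 1) * D = A * ((r : ℝ) + 1) := by
        have h := succ_mul_choose_real (n + r + 1) r
        push_cast at h ⊢
        convert h using 2
      set x := harm (n + r + 1)
      set y := harm r
      have hN : ((n : ℝ) + r + 1 + 1) ≠ 0 := by positivity
      have hR : ((r : ℝ) + 1) ≠ 0 := by positivity
      push_cast
      set u : ℝ := 1 / ((n : ℝ) + r + 1 + 1) with hu'
      set v : ℝ := 1 / ((r : ℝ) + 1) with hv'
      have hu : u * ((n : ℝ) + r + 1 + 1) = 1 := by rw [hu']; field_simp
      have hv : v * ((r : ℝ) + 1) = 1 := by rw [hv']; field_simp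
      linear_combination (v - (x - y)) * pas + u * v * key - v * D * hu + A * u * hv

/-- For positive integers `n, r`,
`H_n^{(r+1)} = ((n+r)/r) H_n^{(r)} - (1/r) C(n+r-1, r)`. -/
theorem hyp_succ_order (n r : ℕ) (hn : 1 ≤ n) (hr : 1 ≤ r) :
    hyp (r + 1) n =
      ((n : ℝ) + r) / r * hyp r n - 1 / r * ((n + r - 1).choose r : ℝ) := by
  obtain ⟨s, rfl⟩ : ∃ s, r = s + 1 := ⟨r - 1, by omega⟩
  rw [hyp_closed (s + 1) n, hyp_closed s n]
  have e1 : n + (s + 1) - 1 = n + s := by omega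
  have e2 : n + (s + 1) = n + s + 1 := by omega
  rw [e1, e2, harm_succ (n + s), harm_succ s]
  set A : ℝ := (((n + s + 1).choose (s + 1)) : ℝ) with hA
  set C : ℝ := (((n + s).choose s) : ℝ) with hC
  set E : ℝ := (((n + s).choose (s + 1)) : ℝ) with hE
  have pas : A = C + E := pascal_real (n + s) s
  have key : ((n : ℝ) + s + 1) * C = A * ((s : ℝ) + 1) := by
    have h := succ_mul_choose_real (n + s) s
    push_cast at h ⊢
    convert h using 2
  set x := harm (n + s)
  set y := harm s
  have hN : ((n : ℝ) + s + 1) ≠ 0 := by positivity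
  have hR : ((s : ℝ) + 1) ≠ 0 := by positivity
  push_cast
  set u : ℝ := 1 / ((n : ℝ) + s + 1) with hu'
  set v : ℝ := 1 / ((s : ℝ) + 1) with hv'
  have hu : u * ((n : ℝ) + s + 1) = 1 := by rw [hu']; field_simp
  have hv : v * ((s : ℝ) + 1) = 1 := by rw [hv']; field_simp
  have hdiv : ((n : ℝ) + ((s : ℝ) + 1)) / ((s : ℝ) + 1) = ((n : ℝ) + s + 1) * v := by
    rw [hv']; ring
  rw [hdiv]
  linear_combination (-(x - y) * v - u * v) * key + (-v) * pas + v * C * hu +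
    (-(A * u) - (x - y) * A) * hv
end
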